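/- arXiv:1711.00778 — 2 statements merged into one kernel-verified Lean document; each statement's English description precedes it below -/
import Mathlib

section
/- Let q : ℝ → ℝ be continuously differentiable with q and q' bounded, and suppose q' is uniformly continuous. Let V : ℝ → ℝ be continuous with only isolated zeros (its zero set has no accumulation points in ℝ), let r : ℝ → ℝ be continuous and bounded with r(t) → 0 as t → +∞, and suppose V((q - r)(t)) · q'(t) → 0 as t → +∞. Then q'(t) → 0 as t → +∞. -/
open Filter Topology

/-- On a compact interval, if `V` is continuous with only isolated zeros, then every
subinterval of length `L` contains a point where `|V|` is at least some uniform `η > 0`. -/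
lemma exists_eta_of_isolated_zeros (V : ℝ → ℝ) (hV : Continuous V)
    (hViso : ∀ x : ℝ, ¬ AccPt x (Filter.principal {y : ℝ | V y = 0}))
    (lo hi L : ℝ) (hL : 0 < L) :
    ∃ η > 0, ∀ a : ℝ, Set.Icc a (a + L) ⊆ Set.Icc lo hi →
      ∃ y ∈ Set.Icc a (a + L), η ≤ |V y| := by
  by_contra h
  push_neg at h
  choose a ha hsmall using fun n : ℕ => h (1 / (n + 1)) (by positivity)
  have hmem : ∀ n, a n ∈ Set.Icc lo hi := fun n =>
    ha n (Set.left_mem_Icc.2 (by linarith))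
  obtain ⟨x, -, φ, hφ, hlim⟩ := isCompact_Icc.tendsto_subseq hmem
  have hφ' : Tendsto φ atTop atTop := hφ.tendsto_atTop
  have hzero : ∀ y ∈ Set.Ioo x (x + L), V y = 0 := by
    intro y hy
    have h1 : ∀ᶠ n in atTop, a (φ n) ∈ Set.Ioo (y - L) y :=
      hlim (Ioo_mem_nhds (by linarith [hy.2]) hy.1)
    have h2 : Tendsto (fun n : ℕ => (1 : ℝ) / (φ n + 1)) atTop (𝓝 0) := by
      have : Tendsto (fun n : ℕ => (1 : ℝ) / ((n : ℝ) + 1)) atTop (𝓝 0) := tendsto_one_div_add_atTop_nhds_zero_nat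
      exact this.comp hφ'
    have h3 : ∀ᶠ n in atTop, |V y| ≤ (1 : ℝ) / (φ n + 1) := by
      filter_upwards [h1] with n hn
      exact le_of_lt (hsmall (φ n) y ⟨by linarith [hn.2], by linarith [hn.1]⟩)
    have : |V y| ≤ 0 := ge_of_tendsto h2 h3
    exact abs_nonpos_iff.mp this
  apply hViso (x + L / 2)
  rw [accPt_iff_nhds]
  intro U hU
  have hUI : U ∩ Set.Ioo x (x + L) ∈ 𝓝 (x + L / 2) :=
    Filter.inter_mem hU (Ioo_mem_nhds (by linarith) (by linarith))
  have hne : ((U ∩ Set.Ioo x (x + L)) ∩ {y : ℝ | y ≠ x + L / 2}).Nonempty := by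
    have h1 : U ∩ Set.Ioo x (x + L) ∈ 𝓝[≠] (x + L / 2) :=
      mem_nhdsWithin_of_mem_nhds hUI
    have h2 : {y : ℝ | y ≠ x + L / 2} ∈ 𝓝[≠] (x + L / 2) := self_mem_nhdsWithin
    exact Filter.nonempty_of_mem (Filter.inter_mem h1 h2)
  obtain ⟨y, ⟨hyU, hyI⟩, hyne⟩ := hne
  exact ⟨y, ⟨hyU, hzero y hyI⟩, hyne⟩

/-- Step 3 of the proof of Theorem 2.5: if `V` is continuous with only isolated zeros,
`q` is `C¹` with `q, q'` bounded and `q'` uniformly continuous, `r → 0`, and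
`V(q - r)·q' → 0` at `+∞`, then `q'(t) → 0` at `+∞`. -/
theorem deriv_tendsto_zero_of_isolated_zeros
    (q r V : ℝ → ℝ)
    (hq : ContDiff ℝ 1 q) (hqb : ∃ C, ∀ t, |q t| ≤ C)
    (hq'b : ∃ C, ∀ t, |deriv q t| ≤ C)
    (hq'uc : UniformContinuous (deriv q))
    (hV : Continuous V)
    (hViso : ∀ x : ℝ, ¬ AccPt x (Filter.principal {y : ℝ | V y = 0}))
    (hr : Continuous r) (hrb : ∃ C, ∀ t, |r t| ≤ C)
    (hr0 : Tendsto r atTop (𝓝 0))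
    (hprod : Tendsto (fun t => V (q t - r t) * deriv q t) atTop (𝓝 0)) :
    Tendsto (deriv q) atTop (𝓝 0) := by
  obtain ⟨Cq, hCq⟩ := hqb
  obtain ⟨Cr, hCr⟩ := hrb
  by_contra hcon
  rw [Metric.tendsto_atTop] at hcon
  push_neg at hcon
  obtain ⟨M, hM, hfreq⟩ := hcon
  simp only [Real.dist_eq, sub_zero] at hfreq
  -- uniform continuity
  rw [Metric.uniformContinuous_iff] at hq'uc
  obtain ⟨δ, hδ, huc⟩ := hq'uc (M / 2) (by linarith)
  set L : ℝ := M * δ / 8 with hLdef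
  have hL : 0 < L := by positivity
  obtain ⟨η, hη, hηp⟩ := exists_eta_of_isolated_zeros V hV hViso (-(Cq + Cr)) (Cq + Cr) L hL
  -- tail bounds
  have hprod' := (Metric.tendsto_atTop.1 hprod) (η * (M / 2)) (by positivity)
  obtain ⟨N₁, hN₁⟩ := hprod'
  have hr0' := (Metric.tendsto_atTop.1 hr0) (M * δ / 16) (by positivity)
  obtain ⟨N₂, hN₂⟩ := hr0'
  obtain ⟨t₀, ht₀, hqt₀⟩ := hfreq (max N₁ N₂)
  simp only [Real.dist_eq, sub_zero] at hN₁ hN₂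
  have hdiff : Differentiable ℝ q := hq.differentiable one_ne_zero
  set b : ℝ := t₀ + δ / 2 with hbdef
  have htb : t₀ < b := by rw [hbdef]; linarith
  -- MVT
  obtain ⟨c, hc, hcslope⟩ := exists_hasDerivAt_eq_slope q (deriv q) htb
    (hdiff.continuous.continuousOn) (fun x _ => (hdiff x).hasDerivAt)
  -- derivative lower bounds near t₀
  have hnear : ∀ s : ℝ, |s - t₀| < δ → M / 2 < |deriv q s| := by
    intro s hs
    have := huc (a := s) (b := t₀) (by rwa [Real.dist_eq])
    rw [Real.dist_eq] at this
    have h1 : |deriv q t₀| - |deriv q s| ≤ |deriv q s - deriv q t₀| := by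
      rw [abs_sub_comm]; exact abs_sub_abs_le_abs_sub _ _
    linarith
  have hc' : M / 2 < |deriv q c| := by
    have h1 : t₀ < c := hc.1
    have h2 : c < t₀ + δ / 2 := by have := hc.2; rwa [hbdef] at this
    apply hnear
    rw [abs_of_pos (by linarith)]
    linarith
  have hslope : M * δ / 4 ≤ |q b - q t₀| := by
    have hb0 : b - t₀ = δ / 2 := by rw [hbdef]; ring
    have : |deriv q c| = |q b - q t₀| / (δ / 2) := by
      rw [hcslope, abs_div, hb0, abs_of_pos (by linarith : (0:ℝ) < δ / 2)]
    rw [this] at hc'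
    rw [lt_div_iff₀ (by linarith : (0:ℝ) < δ / 2)] at hc'
    nlinarith
  set u : ℝ := q t₀ - r t₀ with hudef
  set v : ℝ := q b - r b with hvdef
  have hrt₀ : |r t₀| < M * δ / 16 := hN₂ t₀ (le_trans (le_max_right _ _) ht₀)
  have hrb' : |r b| < M * δ / 16 := hN₂ b (by linarith [le_trans (le_max_right _ _) ht₀])
  have hvu : L ≤ |v - u| := by
    have h1 : |q b - q t₀| - |r b| - |r t₀| ≤ |v - u| := by
      have : v - u = (q b - q t₀) - (r b - r t₀) := by rw [hvdef, hudef]; ring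
      rw [this]
      have h2 := abs_sub_abs_le_abs_sub (q b - q t₀) (r b - r t₀)
      have h3 := abs_sub (r b) (r t₀)
      calc |q b - q t₀| - |r b| - |r t₀| ≤ |q b - q t₀| - |r b - r t₀| := by
            have := abs_sub_abs_le_abs_sub (r b) (r t₀)
            linarith [abs_sub_abs_le_abs_sub (r b) (r t₀), abs_abs_sub_abs_le_abs_sub (r b) (r t₀)]
        _ ≤ |(q b - q t₀) - (r b - r t₀)| := h2
    rw [hLdef]
    linarith
  set w : ℝ := min u v with hwdef
  have hbounds : ∀ t : ℝ, -(Cq + Cr) ≤ q t - r t ∧ q t - r t ≤ Cq + Cr := by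
    intro t
    have h1 := abs_le.1 (hCq t)
    have h2 := abs_le.1 (hCr t)
    constructor <;> linarith
  have huB := hbounds t₀
  have hvB := hbounds b
  have hwL : w + L ≤ max u v := by
    rcases abs_sub_le_iff.1 (le_refl |v - u|) with _
    rcases le_total u v with h | h
    · rw [hwdef, min_eq_left h, max_eq_right h]
      rw [abs_of_nonneg (by linarith)] at hvu; linarith
    · rw [hwdef, min_eq_right h, max_eq_left h]
      rw [abs_of_nonpos (by linarith)] at hvu; linarith
  have hsub : Set.Icc w (w + L) ⊆ Set.Icc (-(Cq + Cr)) (Cq + Cr) := by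
    apply Set.Icc_subset_Icc
    · rw [hwdef, hudef, hvdef]; exact le_min huB.1 hvB.1
    · refine hwL.trans ?_
      rw [hudef, hvdef]; exact max_le huB.2 hvB.2
  obtain ⟨y, hy, hVy⟩ := hηp w hsub
  -- y is in the image of [t₀, b] under q - r
  have hyuIcc : y ∈ Set.uIcc u v := by
    rw [Set.uIcc_eq_union]
    rcases le_total u v with h | h
    · left; rw [hwdef, min_eq_left h] at hy hwL
      exact ⟨hy.1, hy.2.trans (hwL.trans_eq (max_eq_right h))⟩
    · right; rw [hwdef, min_eq_right h] at hy hwL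
      exact ⟨hy.1, hy.2.trans (hwL.trans_eq (max_eq_left h))⟩
  have hcont : ContinuousOn (fun t => q t - r t) (Set.uIcc t₀ b) :=
    (hdiff.continuous.sub hr).continuousOn
  have himg := intermediate_value_uIcc hcont
  have hyimg : y ∈ (fun t => q t - r t) '' Set.uIcc t₀ b := himg hyuIcc
  obtain ⟨s, hs, hsy0⟩ := hyimg
  have hsy : q s - r s = y := hsy0
  rw [Set.uIcc_of_le htb.le] at hs
  have hs' : M / 2 < |deriv q s| := by
    apply hnear
    rw [abs_of_nonneg (by linarith [hs.1])]
    have := hs.2; rw [hbdef] at this; linarith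
  have hbig : η * (M / 2) ≤ |V (q s - r s) * deriv q s| := by
    rw [abs_mul, hsy]
    calc η * (M / 2) ≤ |V y| * (M / 2) := by
          apply mul_le_mul_of_nonneg_right hVy (by linarith)
      _ ≤ |V y| * |deriv q s| := by
          apply mul_le_mul_of_nonneg_left hs'.le (abs_nonneg _)
  have hsmall := hN₁ s (le_trans (le_trans (le_max_left _ _) ht₀) hs.1)
  linarith
end

section
/- Let q : ℝ → ℝ be bounded and Lipschitz, w ∈ L¹(ℝ), and define for t ≥ 0, q^t := q·𝟙_{[0,t]} and A(t) := (w * q^t)(t) = ∫ w(τ) q^t(t-τ) dτ. Then A : [0,∞) → ℝ is bounded and uniformly continuous, with ‖A‖_∞ ≤ ‖w‖_{L¹} ‖q‖_∞. -/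
open MeasureTheory Filter Topology

section Aux

variable {q w : ℝ → ℝ} {C : ℝ}

lemma aux_integrable (hw : Integrable w) (hq : Continuous q) (hqb : ∀ s, |q s| ≤ C)
    (t : ℝ) : Integrable (fun τ : ℝ => w τ * q (t - τ)) := by
  refine Integrable.mono' (hw.norm.mul_const C)
    (hw.1.mul ((hq.comp (continuous_const.sub continuous_id)).aestronglyMeasurable)) ?_
  filter_upwards with τ
  rw [norm_mul]
  exact mul_le_mul_of_nonneg_left ((Real.norm_eq_abs _) ▸ hqb _) (norm_nonneg _)

lemma aux_rewrite (t : ℝ) (τ : ℝ) :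
    w τ * Set.indicator (Set.Icc 0 t) q (t - τ)
      = Set.indicator (Set.Icc 0 t) (fun τ => w τ * q (t - τ)) τ := by
  have hmem : t - τ ∈ Set.Icc (0:ℝ) t ↔ τ ∈ Set.Icc (0:ℝ) t := by
    simp only [Set.mem_Icc]
    constructor <;> rintro ⟨h1, h2⟩ <;> constructor <;> linarith
  by_cases h : τ ∈ Set.Icc (0:ℝ) t
  · rw [Set.indicator_of_mem h, Set.indicator_of_mem (hmem.2 h)]
  · rw [Set.indicator_of_notMem h, Set.indicator_of_notMem (fun hc => h (hmem.1 hc)), mul_zero]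

lemma aux_eq (t : ℝ) :
    (∫ τ : ℝ, w τ * Set.indicator (Set.Icc 0 t) q (t - τ))
      = ∫ τ in Set.Icc 0 t, w τ * q (t - τ) := by
  rw [← integral_indicator measurableSet_Icc]
  exact integral_congr_ae (Filter.Eventually.of_forall fun τ => aux_rewrite t τ)

end Aux

/-- For `q` bounded and Lipschitz and `w ∈ L¹`, the function
`A(t) = (w * q^t)(t)` with `q^t = q·𝟙_{[0,t]}` is bounded by `‖w‖_{L¹}‖q‖_∞` and
uniformly continuous on `[0, ∞)`. -/
theorem truncated_convolution_Cb
    (q : ℝ → ℝ) (K : NNReal) (hqL : LipschitzWith K q)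
    (C : ℝ) (hqb : ∀ s, |q s| ≤ C)
    (w : ℝ → ℝ) (hw : Integrable w) :
    (∀ t : ℝ, 0 ≤ t →
        |∫ τ : ℝ, w τ * Set.indicator (Set.Icc 0 t) q (t - τ)|
          ≤ (∫ τ : ℝ, |w τ|) * C) ∧
      UniformContinuousOn
        (fun t : ℝ => ∫ τ : ℝ, w τ * Set.indicator (Set.Icc 0 t) q (t - τ))
        (Set.Ici 0) := by
  have hqc : Continuous q := hqL.continuous
  have hC0 : 0 ≤ C := le_trans (abs_nonneg _) (hqb 0)
  have hint : ∀ (t : ℝ) (E : Set ℝ), IntegrableOn (fun τ : ℝ => w τ * q (t - τ)) E :=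
    fun t E => (aux_integrable hw hqc hqb t).integrableOn
  constructor
  · -- boundedness
    intro t _
    rw [aux_eq, ← Real.norm_eq_abs]
    calc ‖∫ τ in Set.Icc 0 t, w τ * q (t - τ)‖
        ≤ ∫ τ in Set.Icc 0 t, |w τ| * C := by
          refine norm_integral_le_of_norm_le ((hw.norm.mul_const C).integrableOn) ?_
          filter_upwards with τ
          rw [Real.norm_eq_abs, abs_mul]
          exact mul_le_mul_of_nonneg_left (hqb _) (abs_nonneg _)
      _ ≤ ∫ τ : ℝ, |w τ| * C := by
          refine setIntegral_le_integral (hw.norm.mul_const C) ?_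
          filter_upwards with τ
          exact mul_nonneg (abs_nonneg _) hC0
      _ = (∫ τ : ℝ, |w τ|) * C := by rw [integral_mul_const]
  · -- uniform continuity
    rw [Metric.uniformContinuousOn_iff]
    intro ε hε
    set I : ℝ := ∫ τ : ℝ, |w τ| with hI
    have hI0 : 0 ≤ I := integral_nonneg fun τ => abs_nonneg _
    -- absolute continuity of the integral of |w|
    obtain ⟨δ₀, hδ₀pos, hδ₀⟩ := exists_pos_setLIntegral_lt_of_measure_lt
      (f := fun τ => (‖w τ‖₊ : ENNReal)) hw.2.ne
      (ε := ENNReal.ofReal (ε / (2 * (C + 1))))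
      (by
        simp only [ne_eq, ENNReal.ofReal_eq_zero, not_le]
        positivity)
    obtain ⟨δ₁, hδ₁0, hδ₁pos, hδ₁lt⟩ := ENNReal.lt_iff_exists_real_btwn.1 hδ₀pos.bot_lt
    have hδ₁pos' : 0 < δ₁ := by
      by_contra h
      rw [ENNReal.ofReal_eq_zero.2 (not_lt.1 h)] at hδ₁pos
      exact absurd hδ₁pos (lt_irrefl _)
    set δ : ℝ := min δ₁ (ε / (2 * (I * K + 1))) with hδdef
    have hδpos : 0 < δ := lt_min hδ₁pos' (by positivity)
    refine ⟨δ, hδpos, ?_⟩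
    have key : ∀ s t : ℝ, 0 ≤ s → s ≤ t → t - s < δ →
        dist (∫ τ : ℝ, w τ * Set.indicator (Set.Icc 0 t) q (t - τ))
             (∫ τ : ℝ, w τ * Set.indicator (Set.Icc 0 s) q (s - τ)) < ε := by
      intro s t hs hst hlt
      rw [Real.dist_eq, aux_eq, aux_eq]
      have hsplit : (∫ τ in Set.Icc 0 t, w τ * q (t - τ))
          = (∫ τ in Set.Icc 0 s, w τ * q (t - τ)) + ∫ τ in Set.Ioc s t, w τ * q (t - τ) := by
        rw [← setIntegral_union
          ((Set.Iic_disjoint_Ioc le_rfl).mono Set.Icc_subset_Iic_self le_rfl)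
          measurableSet_Ioc (hint t _) (hint t _), Set.Icc_union_Ioc_eq_Icc hs hst]
      rw [hsplit, add_sub_right_comm, ← integral_sub (hint t _) (hint s _)]
      have h1 : |∫ τ in Set.Icc 0 s, (w τ * q (t - τ) - w τ * q (s - τ))| ≤ I * K * (t - s) := by
        rw [← Real.norm_eq_abs]
        calc ‖∫ τ in Set.Icc 0 s, (w τ * q (t - τ) - w τ * q (s - τ))‖
            ≤ ∫ τ in Set.Icc 0 s, |w τ| * (K * (t - s)) := by
              refine norm_integral_le_of_norm_le ((hw.norm.mul_const _).integrableOn) ?_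
              filter_upwards with τ
              rw [Real.norm_eq_abs, ← mul_sub, abs_mul]
              refine mul_le_mul_of_nonneg_left ?_ (abs_nonneg _)
              have h := hqL.dist_le_mul (t - τ) (s - τ)
              rw [Real.dist_eq, Real.dist_eq] at h
              calc |q (t - τ) - q (s - τ)| ≤ K * |t - τ - (s - τ)| := h
                _ = K * (t - s) := by rw [show t - τ - (s - τ) = t - s by ring,
                    abs_of_nonneg (by linarith)]
          _ ≤ ∫ τ : ℝ, |w τ| * (K * (t - s)) := by
              refine setIntegral_le_integral (hw.norm.mul_const _) ?_
              filter_upwards with τ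
              exact mul_nonneg (abs_nonneg _) (mul_nonneg K.coe_nonneg (by linarith))
          _ = I * K * (t - s) := by rw [integral_mul_const]; ring
      have h2 : |∫ τ in Set.Ioc s t, w τ * q (t - τ)| ≤ C * (∫ τ in Set.Ioc s t, |w τ|) := by
        rw [← Real.norm_eq_abs]
        calc ‖∫ τ in Set.Ioc s t, w τ * q (t - τ)‖
            ≤ ∫ τ in Set.Ioc s t, |w τ| * C := by
              refine norm_integral_le_of_norm_le ((hw.norm.mul_const C).integrableOn) ?_
              filter_upwards with τ
              rw [Real.norm_eq_abs, abs_mul]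
              exact mul_le_mul_of_nonneg_left (hqb _) (abs_nonneg _)
          _ = C * ∫ τ in Set.Ioc s t, |w τ| := by rw [integral_mul_const]; ring
      have hX0 : 0 ≤ ∫ τ in Set.Ioc s t, |w τ| :=
        integral_nonneg fun τ => abs_nonneg _
      have hmeas : volume (Set.Ioc s t) < δ₀ := by
        rw [Real.volume_Ioc]
        refine lt_of_lt_of_le ?_ hδ₁lt.le
        exact (ENNReal.ofReal_lt_ofReal_iff hδ₁pos').2 (lt_of_lt_of_le hlt (min_le_left _ _))
      have h3 : (∫ τ in Set.Ioc s t, |w τ|) < ε / (2 * (C + 1)) := by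
        have hlint := hδ₀ _ hmeas
        have heq : (∫ τ in Set.Ioc s t, |w τ|)
            = (∫⁻ τ in Set.Ioc s t, (‖w τ‖₊ : ENNReal)).toReal := by
          simp_rw [← Real.norm_eq_abs]
          exact integral_norm_eq_lintegral_enorm hw.1.restrict
        rw [heq]
        have htop : (∫⁻ τ in Set.Ioc s t, (‖w τ‖₊ : ENNReal)) ≠ ⊤ :=
          (lt_of_lt_of_le hlint le_top).ne
        have := (ENNReal.toReal_lt_toReal htop ENNReal.ofReal_ne_top).2 hlint
        rwa [ENNReal.toReal_ofReal (by positivity)] at this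
      have hts0 : 0 ≤ t - s := by linarith
      have hdelta2 : t - s < ε / (2 * (I * K + 1)) :=
        lt_of_lt_of_le hlt (min_le_right _ _)
      have hK0 : (0:ℝ) ≤ K := K.coe_nonneg
      have hd1 : (0:ℝ) < 2 * (I * K + 1) := by positivity
      have hd2 : (0:ℝ) < 2 * (C + 1) := by positivity
      have hb1 : I * K * (t - s) < ε / 2 := by
        have h4 : (I * K + 1) * (t - s) < (I * K + 1) * (ε / (2 * (I * K + 1))) :=
          mul_lt_mul_of_pos_left hdelta2 (by linarith)
        have h5 : (I * K + 1) * (ε / (2 * (I * K + 1))) = ε / 2 := by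
          field_simp
        nlinarith
      have hb2 : C * (∫ τ in Set.Ioc s t, |w τ|) < ε / 2 := by
        have h4 : (C + 1) * (∫ τ in Set.Ioc s t, |w τ|) < (C + 1) * (ε / (2 * (C + 1))) :=
          mul_lt_mul_of_pos_left h3 (by linarith)
        have h5 : (C + 1) * (ε / (2 * (C + 1))) = ε / 2 := by
          field_simp
        nlinarith
      calc |(∫ τ in Set.Icc 0 s, (w τ * q (t - τ) - w τ * q (s - τ)))
              + ∫ τ in Set.Ioc s t, w τ * q (t - τ)|
          ≤ |∫ τ in Set.Icc 0 s, (w τ * q (t - τ) - w τ * q (s - τ))|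
              + |∫ τ in Set.Ioc s t, w τ * q (t - τ)| := abs_add_le _ _
        _ ≤ I * K * (t - s) + C * (∫ τ in Set.Ioc s t, |w τ|) := add_le_add h1 h2
        _ < ε := by linarith
    intro x hx y hy hxy
    rw [Real.dist_eq] at hxy
    rcases le_total x y with h | h
    · rw [dist_comm]
      exact key x y hx h (by rw [abs_sub_comm] at hxy; exact lt_of_le_of_lt (le_abs_self _) hxy)
    · exact key y x hy h (lt_of_le_of_lt (le_abs_self _) hxy)
end
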